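/- In the general online learning setting with 0 ≤ ℓ_t(a) ≤ 1 for all t and a, fix a threshold θ ≥ 0 and let t_sw := min{1 ≤ t ≤ n−1 : Σ_t > θ}, with t_sw := n if no such t exists. Let (a_1, …, a_n) be any action sequence with a_t = a*_{t−1} for all t ≤ t_sw (the actions a_t for t > t_sw are arbitrary). Then Reg ≤ [∑_{t=1}^{t_sw} ℓ_t(a*_{t−1}) − L_{t_sw}(a*_{t_sw})] + [∑_{t=t_sw+1}^n ℓ_t(a_t) − inf_{a∈A} ∑_{t=t_sw+1}^n ℓ_t(a)], and moreover the first bracketed term is at most θ + 1. -/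

import Mathlib

/-- **SMART switching lemma.** In the general online learning setting with losses in
`[0,1]`, let `Sg t` be the anytime FTL regret `∑_{i=1}^t (L i (astar (i-1)) - L i (astar i))`,
let `θ ≥ 0`, and let `tsw` be the first `1 ≤ t ≤ n-1` with `Sg t > θ` (and `tsw = n` if
no such `t` exists).  For any action sequence playing FTL up to round `tsw`, the regret
is at most `[∑_{t=1}^{tsw} ℓ t (astar (t-1)) - L tsw (astar tsw)]` plus the regret of
the post-switch play against the best fixed action for rounds `tsw+1, …, n`; moreover
the first bracketed term is at most `θ + 1`. -/
theorem smart_switch_regret_decomposition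
    {A : Type*} [Nonempty A] (n : ℕ) (hn : 1 ≤ n)
    (ℓ : ℕ → A → ℝ)
    (hℓ : ∀ t ∈ Finset.Icc 1 n, ∀ a : A, ℓ t a ∈ Set.Icc (0 : ℝ) 1)
    (astar : ℕ → A)
    (hmin : ∀ t ∈ Finset.Icc 1 n, ∀ a : A,
      ∑ i ∈ Finset.Icc 1 t, ℓ i (astar t) ≤ ∑ i ∈ Finset.Icc 1 t, ℓ i a)
    (Sg : ℕ → ℝ)
    (hSg : ∀ t, Sg t = ∑ i ∈ Finset.Icc 1 t,
        ((∑ j ∈ Finset.Icc 1 i, ℓ j (astar (i - 1))) - ∑ j ∈ Finset.Icc 1 i, ℓ j (astar i)))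
    (θ : ℝ) (hθ : 0 ≤ θ)
    (tsw : ℕ) (htsw1 : 1 ≤ tsw) (htsw2 : tsw ≤ n)
    (htsw3 : ∀ t, 1 ≤ t → t < tsw → Sg t ≤ θ)
    (htsw4 : tsw < n → θ < Sg tsw)
    (a : ℕ → A) (ha : ∀ t ∈ Finset.Icc 1 tsw, a t = astar (t - 1)) :
    ((∑ t ∈ Finset.Icc 1 n, ℓ t (a t)) - ∑ i ∈ Finset.Icc 1 n, ℓ i (astar n)
      ≤ ((∑ t ∈ Finset.Icc 1 tsw, ℓ t (astar (t - 1)))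
            - ∑ i ∈ Finset.Icc 1 tsw, ℓ i (astar tsw))
        + ((∑ t ∈ Finset.Icc (tsw + 1) n, ℓ t (a t))
            - ⨅ a' : A, ∑ t ∈ Finset.Icc (tsw + 1) n, ℓ t a'))
    ∧ (∑ t ∈ Finset.Icc 1 tsw, ℓ t (astar (t - 1)))
        - ∑ i ∈ Finset.Icc 1 tsw, ℓ i (astar tsw) ≤ θ + 1 := by
  classical
  -- splitting sums Icc 1 n = Icc 1 tsw ∪ Icc (tsw+1) n
  have hsplit : ∀ b : ℕ → A, (∑ t ∈ Finset.Icc 1 tsw, ℓ t (b t))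
      + ∑ t ∈ Finset.Icc (tsw + 1) n, ℓ t (b t) = ∑ t ∈ Finset.Icc 1 n, ℓ t (b t) := by
    intro b
    have h1 : Finset.Icc 1 tsw = Finset.Ioc 0 tsw := by rw [← Finset.Icc_add_one_left_eq_Ioc]; rfl
    have h2 : Finset.Icc (tsw + 1) n = Finset.Ioc tsw n := by rw [← Finset.Icc_add_one_left_eq_Ioc]
    have h3 : Finset.Icc 1 n = Finset.Ioc 0 n := by rw [← Finset.Icc_add_one_left_eq_Ioc]; rfl
    rw [h1, h2, h3]
    exact Finset.sum_Ioc_consecutive _ (Nat.zero_le _) htsw2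
  -- the infimum is well-behaved
  have hbdd : BddBelow (Set.range fun a' : A => ∑ t ∈ Finset.Icc (tsw + 1) n, ℓ t a') := by
    refine ⟨0, ?_⟩
    rintro x ⟨a', rfl⟩
    apply Finset.sum_nonneg
    intro t ht
    simp only [Finset.mem_Icc] at ht
    exact (hℓ t (Finset.mem_Icc.mpr ⟨by omega, ht.2⟩) a').1
  -- Part 1
  have part1 : (∑ t ∈ Finset.Icc 1 n, ℓ t (a t)) - ∑ i ∈ Finset.Icc 1 n, ℓ i (astar n)
      ≤ ((∑ t ∈ Finset.Icc 1 tsw, ℓ t (astar (t - 1)))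
            - ∑ i ∈ Finset.Icc 1 tsw, ℓ i (astar tsw))
        + ((∑ t ∈ Finset.Icc (tsw + 1) n, ℓ t (a t))
            - ⨅ a' : A, ∑ t ∈ Finset.Icc (tsw + 1) n, ℓ t a') := by
    have e1 : ∑ t ∈ Finset.Icc 1 tsw, ℓ t (a t)
        = ∑ t ∈ Finset.Icc 1 tsw, ℓ t (astar (t - 1)) :=
      Finset.sum_congr rfl fun t ht => by rw [ha t ht]
    have e2 := hsplit a
    have e3 := hsplit (fun _ => astar n)
    have hinf : (⨅ a' : A, ∑ t ∈ Finset.Icc (tsw + 1) n, ℓ t a')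
        ≤ ∑ t ∈ Finset.Icc (tsw + 1) n, ℓ t (astar n) := ciInf_le hbdd (astar n)
    have hm : ∑ i ∈ Finset.Icc 1 tsw, ℓ i (astar tsw)
        ≤ ∑ i ∈ Finset.Icc 1 tsw, ℓ i (astar n) :=
      hmin tsw (Finset.mem_Icc.mpr ⟨htsw1, htsw2⟩) (astar n)
    linarith
  refine ⟨part1, ?_⟩
  -- key identity: first bracket = Sg tsw
  have key : ∀ T : ℕ, ∑ t ∈ Finset.Icc 1 T, ℓ t (astar (t - 1))
      = (∑ i ∈ Finset.Icc 1 T,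
          ((∑ j ∈ Finset.Icc 1 i, ℓ j (astar (i - 1))) - ∑ j ∈ Finset.Icc 1 i, ℓ j (astar i)))
        + ∑ j ∈ Finset.Icc 1 T, ℓ j (astar T) := by
    intro T
    induction T with
    | zero => simp
    | succ T ih =>
      rw [Finset.sum_Icc_succ_top (Nat.one_le_iff_ne_zero.mpr (Nat.succ_ne_zero T)),
        Finset.sum_Icc_succ_top (Nat.one_le_iff_ne_zero.mpr (Nat.succ_ne_zero T)), ih]
      have h1 : ∑ j ∈ Finset.Icc 1 (T + 1), ℓ j (astar T)
          = (∑ j ∈ Finset.Icc 1 T, ℓ j (astar T)) + ℓ (T + 1) (astar T) :=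
        Finset.sum_Icc_succ_top (Nat.one_le_iff_ne_zero.mpr (Nat.succ_ne_zero T)) _
      have h2 : ∑ j ∈ Finset.Icc 1 (T + 1), ℓ j (astar (T + 1))
          = (∑ j ∈ Finset.Icc 1 T, ℓ j (astar (T + 1))) + ℓ (T + 1) (astar (T + 1)) :=
        Finset.sum_Icc_succ_top (Nat.one_le_iff_ne_zero.mpr (Nat.succ_ne_zero T)) _
      simp only [Nat.add_sub_cancel]
      linarith
  have hbrkt : (∑ t ∈ Finset.Icc 1 tsw, ℓ t (astar (t - 1)))
      - ∑ i ∈ Finset.Icc 1 tsw, ℓ i (astar tsw) = Sg tsw := by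
    rw [hSg tsw, key tsw]; ring
  rw [hbrkt]
  -- Sg tsw = Sg (tsw - 1) + D_tsw
  obtain ⟨s, rfl⟩ : ∃ s, tsw = s + 1 := ⟨tsw - 1, by omega⟩
  have hstep : Sg (s + 1) = Sg s
      + ((∑ j ∈ Finset.Icc 1 (s + 1), ℓ j (astar s))
          - ∑ j ∈ Finset.Icc 1 (s + 1), ℓ j (astar (s + 1))) := by
    rw [hSg (s + 1), hSg s,
      Finset.sum_Icc_succ_top (Nat.one_le_iff_ne_zero.mpr (Nat.succ_ne_zero s))]
    simp [Nat.add_sub_cancel]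
  have hSgs : Sg s ≤ θ := by
    rcases Nat.eq_zero_or_pos s with hs | hs
    · subst hs
      rw [hSg 0]
      simpa using hθ
    · exact htsw3 s hs (Nat.lt_succ_self s)
  -- D ≤ 1
  have hD : (∑ j ∈ Finset.Icc 1 (s + 1), ℓ j (astar s))
      - ∑ j ∈ Finset.Icc 1 (s + 1), ℓ j (astar (s + 1)) ≤ 1 := by
    have h1 : ∑ j ∈ Finset.Icc 1 (s + 1), ℓ j (astar s)
        = (∑ j ∈ Finset.Icc 1 s, ℓ j (astar s)) + ℓ (s + 1) (astar s) :=
      Finset.sum_Icc_succ_top (Nat.one_le_iff_ne_zero.mpr (Nat.succ_ne_zero s)) _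
    have h2 : ∑ j ∈ Finset.Icc 1 (s + 1), ℓ j (astar (s + 1))
        = (∑ j ∈ Finset.Icc 1 s, ℓ j (astar (s + 1))) + ℓ (s + 1) (astar (s + 1)) :=
      Finset.sum_Icc_succ_top (Nat.one_le_iff_ne_zero.mpr (Nat.succ_ne_zero s)) _
    have hmem : (s + 1) ∈ Finset.Icc 1 n := Finset.mem_Icc.mpr ⟨by omega, htsw2⟩
    have hle1 : ℓ (s + 1) (astar s) ≤ 1 := (hℓ (s + 1) hmem (astar s)).2
    have hge0 : 0 ≤ ℓ (s + 1) (astar (s + 1)) := (hℓ (s + 1) hmem (astar (s + 1))).1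
    have hminL : ∑ j ∈ Finset.Icc 1 s, ℓ j (astar s)
        ≤ ∑ j ∈ Finset.Icc 1 s, ℓ j (astar (s + 1)) := by
      rcases Nat.eq_zero_or_pos s with hs | hs
      · subst hs; simp
      · exact hmin s (Finset.mem_Icc.mpr ⟨hs, by omega⟩) (astar (s + 1))
    linarith
  linarith
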